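/- Let Q be a real symmetric n×n matrix, block partitioned with symmetric diagonal blocks Q[i][i], that is strictly block diagonally dominant: λ_min(Q[i][i]) > Σ_{j≠i} ‖Q[i][j]‖_2 for all i ∈ [N]. Then Q is positive definite, and moreover λ_min(Q) ≥ min_{i∈[N]} ( λ_min(Q[i][i]) - Σ_{j≠i} ‖Q[i][j]‖_2 ). -/

import Mathlib

open Matrix BigOperators Finset

noncomputable def specNorm {𝕜 : Type*} [RCLike 𝕜] {m n : Type*} [Fintype m] [Fintype n]
    [DecidableEq m] [DecidableEq n] (A : Matrix m n 𝕜) : ℝ :=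
  ‖LinearMap.toContinuousLinearMap (Matrix.toEuclideanLin A)‖

noncomputable def minEig {n : Type*} [Fintype n] [DecidableEq n] (A : Matrix n n ℝ) : ℝ :=
  sInf {μ : ℝ | (A - μ • 1).det = 0}

noncomputable def maxEig {n : Type*} [Fintype n] [DecidableEq n] (A : Matrix n n ℝ) : ℝ :=
  sSup {μ : ℝ | (A - μ • 1).det = 0}

def blk {N : ℕ} {d : Fin N → ℕ}
    (B : Matrix ((i : Fin N) × Fin (d i)) ((i : Fin N) × Fin (d i)) ℝ) (i j : Fin N) :
    Matrix (Fin (d i)) (Fin (d j)) ℝ := fun a b => B ⟨i, a⟩ ⟨j, b⟩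

noncomputable def eNorm {k : ℕ} (v : Fin k → ℝ) : ℝ := Real.sqrt (∑ a, v a ^ 2)

noncomputable def blockVecNorm {N : ℕ} {d : Fin N → ℕ}
    (x : ((i : Fin N) × Fin (d i)) → ℝ) : ℝ :=
  ⨆ i, eNorm (fun a => x ⟨i, a⟩)

noncomputable def blockOpNorm {N : ℕ} {d : Fin N → ℕ}
    (B : Matrix ((i : Fin N) × Fin (d i)) ((i : Fin N) × Fin (d i)) ℝ) : ℝ :=
  sInf {c | 0 ≤ c ∧ ∀ x, blockVecNorm (B.mulVec x) ≤ c * blockVecNorm x}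

section Helpers

open Pointwise

lemma specNorm_nonneg' {m n : Type*} [Fintype m] [Fintype n] [DecidableEq m] [DecidableEq n]
    (A : Matrix m n ℝ) : 0 ≤ specNorm A := norm_nonneg _

lemma specNorm_transpose' {m n : Type*} [Fintype m] [Fintype n] [DecidableEq m] [DecidableEq n]
    (A : Matrix m n ℝ) : specNorm Aᵀ = specNorm A := by
  have h : Aᵀ = Aᴴ := (Matrix.conjTranspose_eq_transpose_of_trivial A).symm
  rw [h, specNorm, specNorm, Matrix.toEuclideanLin_conjTranspose_eq_adjoint,
    LinearMap.adjoint_toContinuousLinearMap]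
  exact LinearIsometryEquiv.norm_map ContinuousLinearMap.adjoint _

lemma abs_dot_mulVec_le' {m n : Type*} [Fintype m] [Fintype n] [DecidableEq m] [DecidableEq n]
    (A : Matrix m n ℝ) (x : m → ℝ) (y : n → ℝ) :
    |x ⬝ᵥ A.mulVec y| ≤ specNorm A * Real.sqrt (∑ a, x a ^ 2) * Real.sqrt (∑ b, y b ^ 2) := by
  set x' : EuclideanSpace ℝ m := (WithLp.equiv 2 _).symm x with hx'
  set y' : EuclideanSpace ℝ n := (WithLp.equiv 2 _).symm y with hy'
  set T := LinearMap.toContinuousLinearMap (Matrix.toEuclideanLin A) with hT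
  have h1 : x ⬝ᵥ A.mulVec y = inner ℝ x' (T y') := by
    simp [dotProduct, PiLp.inner_apply, hT, Matrix.toEuclideanLin_apply, hx', hy',
      RCLike.inner_apply, WithLp.equiv_symm_apply, mulVec]
    exact Finset.sum_congr rfl fun i _ => mul_comm _ _
  have h2 : ‖x'‖ = Real.sqrt (∑ a, x a ^ 2) := by
    rw [EuclideanSpace.norm_eq]
    simp [hx', WithLp.equiv_symm_apply, Real.norm_eq_abs, sq_abs]
  have h3 : ‖y'‖ = Real.sqrt (∑ b, y b ^ 2) := by
    rw [EuclideanSpace.norm_eq]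
    simp [hy', WithLp.equiv_symm_apply, Real.norm_eq_abs, sq_abs]
  rw [h1]
  calc |inner ℝ x' (T y')| ≤ ‖x'‖ * ‖T y'‖ := abs_real_inner_le_norm _ _
    _ ≤ ‖x'‖ * (‖T‖ * ‖y'‖) := by
        exact mul_le_mul_of_nonneg_left (T.le_opNorm _) (norm_nonneg _)
    _ = specNorm A * Real.sqrt (∑ a, x a ^ 2) * Real.sqrt (∑ b, y b ^ 2) := by
        rw [h2, h3]; simp only [specNorm, ← hT]; ring

lemma eigSet_eq_spectrum' {n : Type*} [Fintype n] [DecidableEq n] (A : Matrix n n ℝ) :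
    {μ : ℝ | (A - μ • 1).det = 0} = spectrum ℝ A := by
  ext μ
  rw [Set.mem_setOf_eq, spectrum.mem_iff, Matrix.isUnit_iff_isUnit_det, isUnit_iff_ne_zero,
    not_ne_iff, Algebra.algebraMap_eq_smul_one]
  constructor
  · intro h
    have h2 : (μ • (1 : Matrix n n ℝ) - A) = -(A - μ • 1) := (neg_sub _ _).symm
    rw [h2, Matrix.det_neg, h, mul_zero]
  · intro h
    have h2 : (A - μ • (1 : Matrix n n ℝ)) = -(μ • 1 - A) := (neg_sub _ _).symm
    rw [h2, Matrix.det_neg, h, mul_zero]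

lemma isHermitian_of_isSymm' {n : Type*} [Fintype n] {A : Matrix n n ℝ} (h : A.IsSymm) :
    A.IsHermitian := by
  rwa [Matrix.IsHermitian, Matrix.conjTranspose_eq_transpose_of_trivial]

lemma minEig_empty' {n : Type*} [Fintype n] [DecidableEq n] [IsEmpty n] (A : Matrix n n ℝ) :
    minEig A = 0 := by
  have : {μ : ℝ | (A - μ • 1).det = 0} = ∅ := by
    ext μ; simp [Matrix.det_isEmpty]
  rw [minEig, this, Real.sInf_empty]

/-- lower bound on quadratic form by `minEig`. -/
lemma minEig_quadform_le' {n : Type*} [Fintype n] [DecidableEq n] {A : Matrix n n ℝ}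
    (hA : A.IsSymm) (x : n → ℝ) :
    minEig A * (∑ a, x a ^ 2) ≤ x ⬝ᵥ A.mulVec x := by
  have hH : A.IsHermitian := isHermitian_of_isSymm' hA
  set c := minEig A with hc
  have hB : (A - c • 1).IsHermitian := by
    refine hH.sub ?_
    rw [Matrix.IsHermitian, Matrix.conjTranspose_smul, Matrix.conjTranspose_one, star_trivial]
  have hPSD : (A - c • 1).PosSemidef := by
    refine hB.posSemidef_iff_eigenvalues_nonneg.mpr fun k => ?_
    have hk : hB.eigenvalues k ∈ spectrum ℝ (A - c • 1) := hB.eigenvalues_mem_spectrum_real k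
    have hk' : hB.eigenvalues k ∈ spectrum ℝ A - ({c} : Set ℝ) := by
      rw [spectrum.sub_singleton_eq]
      have e : algebraMap ℝ (Matrix n n ℝ) c = c • 1 := Algebra.algebraMap_eq_smul_one c
      rw [e]
      exact hk
    obtain ⟨μ, hμ, e, he, hsum⟩ := Set.mem_sub.mp hk'
    have hec : e = c := he
    have hbdd : BddBelow {μ : ℝ | (A - μ • 1).det = 0} := by
      rw [eigSet_eq_spectrum']
      exact (Matrix.finite_real_spectrum).bddBelow
    have hcμ : c ≤ μ := by
      rw [hc, minEig]
      exact csInf_le hbdd (by rw [eigSet_eq_spectrum']; exact hμ)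
    rw [← hsum, hec, Pi.zero_apply]; linarith
  have h0 := hPSD.dotProduct_mulVec_nonneg x
  simp only [star_trivial, RCLike.re_to_real] at h0
  have hexp : x ⬝ᵥ (A - c • 1).mulVec x = x ⬝ᵥ A.mulVec x - c * ∑ a, x a ^ 2 := by
    rw [Matrix.sub_mulVec, dotProduct_sub, Matrix.smul_mulVec, Matrix.one_mulVec,
      dotProduct_smul]
    simp [dotProduct, smul_eq_mul, mul_sum, pow_two, mul_comm]
  rw [hexp] at h0
  linarith

/-- lower bound the `minEig` from a quadratic-form bound. -/
lemma le_minEig' {n : Type*} [Fintype n] [DecidableEq n] [Nonempty n] {A : Matrix n n ℝ}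
    (hA : A.IsSymm) {c : ℝ} (h : ∀ x : n → ℝ, c * (∑ a, x a ^ 2) ≤ x ⬝ᵥ A.mulVec x) :
    c ≤ minEig A := by
  have hH : A.IsHermitian := isHermitian_of_isSymm' hA
  rw [minEig]
  refine le_csInf ?_ fun μ hμ => ?_
  · rw [eigSet_eq_spectrum', hH.spectrum_real_eq_range_eigenvalues]
    exact Set.range_nonempty _
  · rw [Set.mem_setOf_eq] at hμ
    obtain ⟨v, hv0, hv⟩ := Matrix.exists_mulVec_eq_zero_iff.mpr hμ
    have hAv : A.mulVec v = μ • v := by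
      have := hv
      rw [Matrix.sub_mulVec, Matrix.smul_mulVec, Matrix.one_mulVec, sub_eq_zero] at this
      exact this
    have hdot : v ⬝ᵥ A.mulVec v = μ * ∑ a, v a ^ 2 := by
      rw [hAv]
      simp only [dotProduct, Pi.smul_apply, smul_eq_mul, Finset.mul_sum]
      exact Finset.sum_congr rfl fun a _ => by ring
    have hpos : 0 < ∑ a, v a ^ 2 := by
      rcases Function.ne_iff.mp hv0 with ⟨a, ha⟩
      have : 0 < v a ^ 2 := lt_of_le_of_ne (sq_nonneg _) (Ne.symm (pow_ne_zero 2 ha))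
      exact lt_of_lt_of_le this (Finset.single_le_sum (fun b _ => sq_nonneg (v b)) (mem_univ a))
    have := h v
    rw [hdot] at this
    exact le_of_mul_le_mul_right (by linarith) hpos

lemma quad_decomp' {N : ℕ} {d : Fin N → ℕ}
    (Q : Matrix ((i : Fin N) × Fin (d i)) ((i : Fin N) × Fin (d i)) ℝ)
    (x : ((i : Fin N) × Fin (d i)) → ℝ) :
    x ⬝ᵥ Q.mulVec x
      = ∑ i, ∑ j, (fun a => x ⟨i, a⟩) ⬝ᵥ (blk Q i j).mulVec (fun b => x ⟨j, b⟩) := by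
  simp only [dotProduct, mulVec, blk]
  rw [← Finset.univ_sigma_univ, Finset.sum_sigma]
  refine Finset.sum_congr rfl fun i _ => ?_
  calc ∑ a, x ⟨i, a⟩ * ∑ q : (i : Fin N) × Fin (d i), Q ⟨i, a⟩ q * x q
      = ∑ a, ∑ j, ∑ b, x ⟨i, a⟩ * (Q ⟨i, a⟩ ⟨j, b⟩ * x ⟨j, b⟩) := by
        refine Finset.sum_congr rfl fun a _ => ?_
        rw [← Finset.univ_sigma_univ, Finset.sum_sigma, Finset.mul_sum]
        simp [Finset.mul_sum]
    _ = ∑ j, ∑ a, ∑ b, x ⟨i, a⟩ * (Q ⟨i, a⟩ ⟨j, b⟩ * x ⟨j, b⟩) := Finset.sum_comm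
    _ = ∑ j, ∑ a, x ⟨i, a⟩ * ∑ b, Q ⟨i, a⟩ ⟨j, b⟩ * x ⟨j, b⟩ := by
        refine Finset.sum_congr rfl fun j _ => Finset.sum_congr rfl fun a _ => ?_
        rw [Finset.mul_sum]

end Helpers

theorem bdd_implies_posdef {N : ℕ} (hN : 0 < N) {d : Fin N → ℕ}
    (Q : Matrix ((i : Fin N) × Fin (d i)) ((i : Fin N) × Fin (d i)) ℝ)
    (hQ : Q.IsSymm)
    (hdd : ∀ i, ∑ j ∈ Finset.univ.erase i, specNorm (blk Q i j) < minEig (blk Q i i)) :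
    Q.PosDef ∧
      (⨅ i, (minEig (blk Q i i) - ∑ j ∈ Finset.univ.erase i, specNorm (blk Q i j)))
        ≤ minEig Q := by
  classical
  set m : Fin N → ℝ := fun i => minEig (blk Q i i) with hm
  set S : Fin N → Fin N → ℝ := fun i j => specNorm (blk Q i j) with hS
  set r : Fin N → ℝ := fun i => ∑ j ∈ Finset.univ.erase i, S i j with hr
  set ε : ℝ := ⨅ i, (m i - r i) with hε
  -- all blocks have positive dimension
  have hd : ∀ i, 0 < d i := by
    intro i
    by_contra h
    have h0 : d i = 0 := Nat.eq_zero_of_not_pos h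
    haveI : IsEmpty (Fin (d i)) := by rw [h0]; infer_instance
    have h1 : m i = 0 := minEig_empty' _
    have h2 := hdd i
    have h3 : (0:ℝ) ≤ ∑ j ∈ Finset.univ.erase i, specNorm (blk Q i j) :=
      Finset.sum_nonneg fun j _ => specNorm_nonneg' _
    have h4 : m i = minEig (blk Q i i) := rfl
    linarith
  haveI hne : Nonempty ((i : Fin N) × Fin (d i)) :=
    ⟨⟨⟨0, hN⟩, ⟨0, hd ⟨0, hN⟩⟩⟩⟩
  haveI : Nonempty (Fin N) := ⟨⟨0, hN⟩⟩
  -- block symmetry facts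
  have hblkT : ∀ i j, blk Q j i = (blk Q i j)ᵀ := by
    intro i j; ext a b
    exact hQ.apply ⟨i, b⟩ ⟨j, a⟩
  have hSsymm : ∀ i j, S j i = S i j := by
    intro i j
    rw [hS]; simp only
    rw [hblkT i j, specNorm_transpose']
  have hblk_sym : ∀ i, (blk Q i i).IsSymm := by
    intro i
    rw [Matrix.IsSymm, ← hblkT i i]
  -- epsilon facts
  have hεle : ∀ i, ε ≤ m i - r i := fun i =>
    ciInf_le (Set.Finite.bddBelow (Set.finite_range _)) i
  have hεpos : 0 < ε := by
    obtain ⟨i₀, hi₀⟩ := Finite.exists_min (fun i => m i - r i)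
    have h1 : m i₀ - r i₀ ≤ ε := le_ciInf hi₀
    have h2 : 0 < m i₀ - r i₀ := sub_pos.2 (hdd i₀)
    linarith
  -- the key quadratic form bound
  have hquad : ∀ x : ((i : Fin N) × Fin (d i)) → ℝ,
      ε * (∑ p, x p ^ 2) ≤ x ⬝ᵥ Q.mulVec x := by
    intro x
    set w : Fin N → ℝ := fun i => ∑ a, x ⟨i, a⟩ ^ 2 with hw
    have hwnn : ∀ i, 0 ≤ w i := fun i => Finset.sum_nonneg fun a _ => sq_nonneg _
    have hsum_w : ∑ p, x p ^ 2 = ∑ i, w i := by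
      rw [← Finset.univ_sigma_univ, Finset.sum_sigma]
    -- diagonal bound
    have hdiag : ∀ i, m i * w i ≤ (fun a => x ⟨i, a⟩) ⬝ᵥ (blk Q i i).mulVec (fun b => x ⟨i, b⟩) :=
      fun i => minEig_quadform_le' (hblk_sym i) _
    -- off-diagonal bound
    have hoff : ∀ i j, -(S i j * ((w i + w j) / 2))
        ≤ (fun a => x ⟨i, a⟩) ⬝ᵥ (blk Q i j).mulVec (fun b => x ⟨j, b⟩) := by
      intro i j
      have h1 := abs_dot_mulVec_le' (blk Q i j) (fun a => x ⟨i, a⟩) (fun b => x ⟨j, b⟩)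
      have h2 : Real.sqrt (w i) * Real.sqrt (w j) ≤ (w i + w j) / 2 := by
        nlinarith [Real.sq_sqrt (hwnn i), Real.sq_sqrt (hwnn j), Real.sqrt_nonneg (w i),
          Real.sqrt_nonneg (w j), sq_nonneg (Real.sqrt (w i) - Real.sqrt (w j))]
      have h3 : specNorm (blk Q i j) * Real.sqrt (w i) * Real.sqrt (w j)
          ≤ S i j * ((w i + w j) / 2) := by
        rw [mul_assoc]
        exact mul_le_mul_of_nonneg_left h2 (specNorm_nonneg' _)
      have h4 := (abs_le.mp (h1.trans h3)).1
      linarith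
    -- sum over j for fixed i
    have hrow : ∀ i, m i * w i - ∑ j ∈ Finset.univ.erase i, S i j * ((w i + w j) / 2)
        ≤ ∑ j, (fun a => x ⟨i, a⟩) ⬝ᵥ (blk Q i j).mulVec (fun b => x ⟨j, b⟩) := by
      intro i
      rw [← Finset.sum_erase_add _ _ (mem_univ i)]
      have h1 : ∑ j ∈ Finset.univ.erase i, -(S i j * ((w i + w j) / 2))
          ≤ ∑ j ∈ Finset.univ.erase i,
            (fun a => x ⟨i, a⟩) ⬝ᵥ (blk Q i j).mulVec (fun b => x ⟨j, b⟩) :=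
        Finset.sum_le_sum fun j _ => hoff i j
      rw [Finset.sum_neg_distrib] at h1
      have := hdiag i
      linarith
    -- the off-diagonal double sum equals ∑ i, r i * w i
    have hdouble : ∑ i, ∑ j ∈ Finset.univ.erase i, S i j * ((w i + w j) / 2)
        = ∑ i, r i * w i := by
      have hsplit : ∀ i, ∑ j ∈ Finset.univ.erase i, S i j * ((w i + w j) / 2)
          = (∑ j ∈ Finset.univ.erase i, S i j * w i) / 2
            + (∑ j ∈ Finset.univ.erase i, S i j * w j) / 2 := by
        intro i
        rw [Finset.sum_div, Finset.sum_div, ← Finset.sum_add_distrib]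
        exact Finset.sum_congr rfl fun j _ => by ring
      simp only [hsplit]
      rw [Finset.sum_add_distrib]
      have h1 : ∑ i, (∑ j ∈ Finset.univ.erase i, S i j * w i) / 2
          = (∑ i, r i * w i) / 2 := by
        rw [← Finset.sum_div]
        congr 1
        refine Finset.sum_congr rfl fun i _ => ?_
        rw [hr]; simp only
        rw [Finset.sum_mul]
      have h2 : ∑ i, (∑ j ∈ Finset.univ.erase i, S i j * w j) / 2
          = (∑ i, r i * w i) / 2 := by
        rw [← Finset.sum_div]
        congr 1
        have hswap : ∑ i, ∑ j ∈ Finset.univ.erase i, S i j * w j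
            = ∑ j, ∑ i ∈ Finset.univ.erase j, S i j * w j := by
          refine Finset.sum_comm' fun i j => ?_
          simp [Finset.mem_erase, eq_comm, ne_comm]
        rw [hswap]
        refine Finset.sum_congr rfl fun j _ => ?_
        rw [← Finset.sum_mul]
        congr 1
        rw [hr]; simp only
        exact Finset.sum_congr rfl fun i _ => (hSsymm i j).symm
      rw [h1, h2]
      ring
    -- put it together
    calc ε * (∑ p, x p ^ 2) = ∑ i, ε * w i := by rw [hsum_w, Finset.mul_sum]
      _ ≤ ∑ i, (m i - r i) * w i :=
          Finset.sum_le_sum fun i _ => mul_le_mul_of_nonneg_right (hεle i) (hwnn i)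
      _ = ∑ i, (m i * w i - ∑ j ∈ Finset.univ.erase i, S i j * ((w i + w j) / 2)) := by
          have e1 : ∑ i, (m i - r i) * w i = ∑ i, m i * w i - ∑ i, r i * w i := by
            rw [← Finset.sum_sub_distrib]
            exact Finset.sum_congr rfl fun i _ => by ring
          have e2 : ∑ i, (m i * w i - ∑ j ∈ Finset.univ.erase i, S i j * ((w i + w j) / 2))
              = ∑ i, m i * w i - ∑ i, r i * w i := by
            rw [Finset.sum_sub_distrib, hdouble]
          rw [e1, e2]
      _ ≤ ∑ i, ∑ j, (fun a => x ⟨i, a⟩) ⬝ᵥ (blk Q i j).mulVec (fun b => x ⟨j, b⟩) :=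
          Finset.sum_le_sum fun i _ => hrow i
      _ = x ⬝ᵥ Q.mulVec x := (quad_decomp' Q x).symm
  constructor
  · refine Matrix.PosDef.of_dotProduct_mulVec_pos (isHermitian_of_isSymm' hQ) fun x hx => ?_
    have hpos : 0 < ∑ p, x p ^ 2 := by
      rcases Function.ne_iff.mp hx with ⟨p, hp⟩
      have : 0 < x p ^ 2 := lt_of_le_of_ne (sq_nonneg _) (Ne.symm (pow_ne_zero 2 hp))
      exact lt_of_lt_of_le this (Finset.single_le_sum (fun q _ => sq_nonneg (x q)) (mem_univ p))
    have := hquad x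
    have h1 : 0 < ε * ∑ p, x p ^ 2 := mul_pos hεpos hpos
    simp only [star_trivial]
    linarith
  · exact le_minEig' hQ hquad
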